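/- Let (V,⟨·,·⟩) be a finite-dimensional real vector space with a positive definite inner product, D an antisymmetric endomorphism of V (⟨Dx,y⟩ = −⟨x,Dy⟩) with D² = −id, and θ an isometric involution of V with D∘θ = −θ∘D. Set V₋ := ker(θ + id). Then the map φ ↦ b_φ, where b_φ(x,y) := ⟨φ(Dx), y⟩ for x,y ∈ V₋, is a linear isomorphism from the space {φ : V → V linear : ⟨φx,y⟩ = −⟨x,φy⟩, φ∘D = D∘φ, φ∘θ = −θ∘φ} onto the space of symmetric bilinear forms on V₋. -/

import Mathlib

set_option maxHeartbeats 1000000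


open LinearMap

/-- The map φ ↦ b_φ, b_φ(x,y) = ⟨φ(Dx),y⟩ on V₋ = ker(θ + id). -/
noncomputable def iota8 {V : Type*} [AddCommGroup V] [Module ℝ V]
    (B : LinearMap.BilinForm ℝ V) (D θ : V →ₗ[ℝ] V) (φ : V →ₗ[ℝ] V) :
    LinearMap.BilinForm ℝ ↥(LinearMap.ker (θ + LinearMap.id)) :=
  B.compl₁₂ (φ ∘ₗ D ∘ₗ (LinearMap.ker (θ + LinearMap.id)).subtype)
    ((LinearMap.ker (θ + LinearMap.id)).subtype)

/-- For a positive definite space (V,⟨·,·⟩) with antisymmetric D, D² = −id, and isometric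
involution θ anticommuting with D, the map φ ↦ ⟨φ(D·),·⟩ is a linear bijection from the
antisymmetric endomorphisms commuting with D and anticommuting with θ onto the symmetric
bilinear forms on V₋. -/
theorem stmt8 {V : Type*} [AddCommGroup V] [Module ℝ V] [FiniteDimensional ℝ V]
    (B : LinearMap.BilinForm ℝ V)
    (hsymm : ∀ x y, B x y = B y x)
    (hpos : ∀ x : V, x ≠ 0 → 0 < B x x)
    (D : V →ₗ[ℝ] V)
    (hDskew : ∀ x y, B (D x) y = -(B x (D y)))
    (hD2 : D ∘ₗ D = -LinearMap.id)
    (θ : V →ₗ[ℝ] V)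
    (hθ2 : θ ∘ₗ θ = LinearMap.id)
    (hθiso : ∀ x y, B (θ x) (θ y) = B x y)
    (hDθ : D ∘ₗ θ = -(θ ∘ₗ D)) :
    (∀ φ ψ : V →ₗ[ℝ] V, iota8 B D θ (φ + ψ) = iota8 B D θ φ + iota8 B D θ ψ) ∧
      (∀ (c : ℝ) (φ : V →ₗ[ℝ] V), iota8 B D θ (c • φ) = c • iota8 B D θ φ) ∧
      Set.BijOn (iota8 B D θ)
        {φ : V →ₗ[ℝ] V | (∀ x y, B (φ x) y = -(B x (φ y))) ∧
          φ ∘ₗ D = D ∘ₗ φ ∧ φ ∘ₗ θ = -(θ ∘ₗ φ)}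
        {b : LinearMap.BilinForm ℝ ↥(LinearMap.ker (θ + LinearMap.id)) |
          ∀ x y, b x y = b y x} := by
  -- pointwise versions of hypotheses
  have hθ2' : ∀ v, θ (θ v) = v := fun v => by
    have := LinearMap.ext_iff.mp hθ2 v; simpa using this
  have hD2' : ∀ v, D (D v) = -v := fun v => by
    have := LinearMap.ext_iff.mp hD2 v; simpa using this
  have hDθ' : ∀ v, D (θ v) = -θ (D v) := fun v => by
    have := LinearMap.ext_iff.mp hDθ v; simpa using this
  have hmem : ∀ v : V, v ∈ LinearMap.ker (θ + LinearMap.id) ↔ θ v = -v := fun v => by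
    rw [LinearMap.mem_ker, LinearMap.add_apply, LinearMap.id_apply, add_eq_zero_iff_eq_neg]
  -- orthogonality of eigenspaces
  have orth : ∀ z u : V, θ z = -z → θ u = u → B z u = 0 := by
    intro z u hz hu
    have h := hθiso z u
    rw [hz, hu, map_neg, LinearMap.neg_apply] at h
    linarith
  -- positivity consequences
  have hzero : ∀ v : V, (∀ w, B v w = 0) → v = 0 := by
    intro v hv
    by_contra hne
    have := hpos v hne
    rw [hv v] at this; exact lt_irrefl 0 this
  -- linearity of iota8
  have hadd : ∀ φ ψ : V →ₗ[ℝ] V, iota8 B D θ (φ + ψ) = iota8 B D θ φ + iota8 B D θ ψ := by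
    intro φ ψ
    refine LinearMap.ext fun x => LinearMap.ext fun y => ?_
    simp only [iota8, LinearMap.compl₁₂_apply, LinearMap.comp_apply, LinearMap.add_apply,
      map_add, Submodule.subtype_apply]
  have hsmul : ∀ (c : ℝ) (φ : V →ₗ[ℝ] V), iota8 B D θ (c • φ) = c • iota8 B D θ φ := by
    intro c φ
    refine LinearMap.ext fun x => LinearMap.ext fun y => ?_
    simp only [iota8, LinearMap.compl₁₂_apply, LinearMap.comp_apply, LinearMap.smul_apply,
      map_smul, Submodule.subtype_apply, LinearMap.smul_apply, smul_eq_mul]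
  have hsub : ∀ φ ψ : V →ₗ[ℝ] V, iota8 B D θ (φ - ψ) = iota8 B D θ φ - iota8 B D θ ψ := by
    intro φ ψ
    refine LinearMap.ext fun x => LinearMap.ext fun y => ?_
    simp only [iota8, LinearMap.compl₁₂_apply, LinearMap.comp_apply, LinearMap.sub_apply,
      map_sub, Submodule.subtype_apply]
  refine ⟨hadd, hsmul, ?_, ?_, ?_⟩
  · -- maps to symmetric forms
    rintro φ ⟨hanti, hcomm, -⟩ x y
    have hc : ∀ v, D (φ v) = φ (D v) := fun v => by
      have := LinearMap.ext_iff.mp hcomm v; simpa using this.symm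
    simp only [iota8, LinearMap.compl₁₂_apply, LinearMap.comp_apply, Submodule.subtype_apply]
    calc B (φ (D ↑x)) ↑y = -(B (D ↑x) (φ ↑y)) := hanti _ _
      _ = B (↑x) (D (φ ↑y)) := by rw [hDskew]; ring
      _ = B (↑x) (φ (D ↑y)) := by rw [hc]
      _ = B (φ (D ↑y)) ↑x := hsymm _ _
  · -- injective on the set
    intro φ hφ ψ hψ hiota
    have hχ : ∀ χ : V →ₗ[ℝ] V,
        (∀ x y, B (χ x) y = -(B x (χ y))) → χ ∘ₗ D = D ∘ₗ χ → χ ∘ₗ θ = -(θ ∘ₗ χ) →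
        iota8 B D θ χ = 0 → χ = 0 := by
      intro χ hanti hcomm hantiθ hi
      have hθχ : ∀ v, θ (χ v) = -χ (θ v) := fun v => by
        have h := LinearMap.ext_iff.mp hantiθ v
        simp only [LinearMap.comp_apply, LinearMap.neg_apply] at h
        rw [h, neg_neg]
      have hi' : ∀ x y : V, θ x = -x → θ y = -y → B (χ (D x)) y = 0 := by
        intro x y hx hy
        have := LinearMap.ext_iff.mp hi ⟨x, (hmem x).mpr hx⟩
        have := LinearMap.ext_iff.mp this ⟨y, (hmem y).mpr hy⟩
        simpa [iota8] using this
      have key : ∀ v w : V, B (χ v) w = 0 := by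
        have hmm : ∀ v w, θ v = -v → θ w = -w → B (χ v) w = 0 := by
          intro v w hv hw
          have h1 : θ (χ v) = χ v := by rw [hθχ, hv, map_neg, neg_neg]
          rw [hsymm]; exact orth w (χ v) hw h1
        have hpp : ∀ v w, θ v = v → θ w = w → B (χ v) w = 0 := by
          intro v w hv hw
          have h1 : θ (χ v) = -χ v := by rw [hθχ, hv]
          exact orth (χ v) w h1 hw
        have hpm : ∀ v w, θ v = v → θ w = -w → B (χ v) w = 0 := by
          intro v w hv hw
          have h := hDθ' v
          rw [hv] at h
          have h1 : θ (D v) = -(D v) := neg_eq_iff_eq_neg.mp h.symm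
          have hx : θ (-(D v)) = -(-(D v)) := by rw [map_neg, h1]
          have h0 := hi' (-(D v)) w hx hw
          simpa [hD2'] using h0
        have hmp : ∀ v w, θ v = -v → θ w = w → B (χ v) w = 0 := by
          intro v w hv hw
          have h := hDθ' w
          rw [hw] at h
          have h1 : θ (D w) = -(D w) := neg_eq_iff_eq_neg.mp h.symm
          have hx : θ (-(D w)) = -(-(D w)) := by rw [map_neg, h1]
          have h0 := hi' (-(D w)) v hx hv
          have h0' : B (χ w) v = 0 := by simpa [hD2'] using h0
          rw [hanti, hsymm, h0', neg_zero]
        intro v w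
        have hv1 : θ ((2⁻¹:ℝ) • (v + θ v)) = (2⁻¹:ℝ) • (v + θ v) := by
          rw [map_smul, map_add, hθ2', add_comm]
        have hv2 : θ ((2⁻¹:ℝ) • (v - θ v)) = -((2⁻¹:ℝ) • (v - θ v)) := by
          rw [map_smul, map_sub, hθ2', ← smul_neg, neg_sub]
        have hw1 : θ ((2⁻¹:ℝ) • (w + θ w)) = (2⁻¹:ℝ) • (w + θ w) := by
          rw [map_smul, map_add, hθ2', add_comm]
        have hw2 : θ ((2⁻¹:ℝ) • (w - θ w)) = -((2⁻¹:ℝ) • (w - θ w)) := by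
          rw [map_smul, map_sub, hθ2', ← smul_neg, neg_sub]
        have hdv : v = (2⁻¹:ℝ) • (v + θ v) + (2⁻¹:ℝ) • (v - θ v) := by module
        have hdw : w = (2⁻¹:ℝ) • (w + θ w) + (2⁻¹:ℝ) • (w - θ w) := by module
        conv_lhs => rw [hdv, hdw]
        simp only [map_add, LinearMap.add_apply]
        rw [hpp _ _ hv1 hw1, hpm _ _ hv1 hw2, hmp _ _ hv2 hw1, hmm _ _ hv2 hw2]
        norm_num
      have : χ = 0 := by
        ext v
        simp only [LinearMap.zero_apply]
        exact hzero (χ v) (key v)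
      exact this
    -- apply to φ - ψ
    have h1 := hχ (φ - ψ) ?_ ?_ ?_ ?_
    · exact sub_eq_zero.mp h1
    · intro x y
      simp only [LinearMap.sub_apply, map_sub, LinearMap.sub_apply]
      rw [hφ.1 x y, hψ.1 x y]; ring
    · rw [LinearMap.sub_comp, LinearMap.comp_sub, hφ.2.1, hψ.2.1]
    · rw [LinearMap.sub_comp, LinearMap.comp_sub, hφ.2.2, hψ.2.2]; abel
    · rw [hsub, hiota]; exact sub_self (iota8 B D θ ψ)
  · -- surjective
    intro b hb
    have hnd : (B.restrict (LinearMap.ker (θ + LinearMap.id))).Nondegenerate := by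
      refine ⟨fun x hx => ?_, fun x hx => ?_⟩
      by_contra hne
      have h0 : (x : V) ≠ 0 := by
        intro h; exact hne (Subtype.ext h)
      have hp := hpos _ h0
      have hxx := hx x
      simp only [LinearMap.BilinForm.restrict_apply, LinearMap.domRestrict_apply] at hxx
      rw [hxx] at hp
      exact lt_irrefl 0 hp
      by_contra hne
      have h0 : (x : V) ≠ 0 := by
        intro h; exact hne (Subtype.ext h)
      have hp := hpos _ h0
      have hxx := hx x
      simp only [LinearMap.BilinForm.restrict_apply, LinearMap.domRestrict_apply] at hxx
      rw [hxx] at hp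
      exact lt_irrefl 0 hp
    set Bm := B.restrict (LinearMap.ker (θ + LinearMap.id)) with hBmdef
    set ψ : ↥(LinearMap.ker (θ + LinearMap.id)) →ₗ[ℝ] ↥(LinearMap.ker (θ + LinearMap.id)) :=
      (Bm.toDual hnd).symm.toLinearMap ∘ₗ b with hψdef
    have hψ : ∀ x y, Bm (ψ x) y = b x y := fun x y =>
      LinearMap.BilinForm.apply_toDual_symm_apply (hB := hnd) (b x) y
    -- the projection onto V₋
    have hPmmem : ∀ v : V, ((2⁻¹:ℝ) • (LinearMap.id - θ) : V →ₗ[ℝ] V) v ∈ LinearMap.ker (θ + LinearMap.id) := by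
      intro v
      rw [hmem]
      simp only [LinearMap.smul_apply, LinearMap.sub_apply, LinearMap.id_apply]
      rw [map_smul, map_sub, hθ2', ← smul_neg, neg_sub]
    set Pm : V →ₗ[ℝ] ↥(LinearMap.ker (θ + LinearMap.id)) :=
      LinearMap.codRestrict _ ((2⁻¹:ℝ) • (LinearMap.id - θ) : V →ₗ[ℝ] V) hPmmem with hPmdef
    have hPm_apply : ∀ v : V, (Pm v : V) = (2⁻¹:ℝ) • (v - θ v) := by
      intro v
      simp [hPmdef, LinearMap.codRestrict_apply]
    have hPm_fix : ∀ v : V, θ v = -v → (Pm v : V) = v := by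
      intro v hv
      rw [hPm_apply, hv]
      module
    have hPm_zero : ∀ v : V, θ v = v → Pm v = 0 := by
      intro v hv
      apply Subtype.ext
      rw [hPm_apply, hv, sub_self, smul_zero]; rfl
    have hPm_theta : ∀ v : V, Pm (θ v) = -(Pm v) := by
      intro v
      apply Subtype.ext
      rw [hPm_apply]
      have : ((-(Pm v) : ↥(LinearMap.ker (θ + LinearMap.id))) : V) = -(Pm v : V) := rfl
      rw [this, hPm_apply, hθ2']
      module
    set ψh : V →ₗ[ℝ] V :=
      (LinearMap.ker (θ + LinearMap.id)).subtype ∘ₗ ψ ∘ₗ Pm with hψhdef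
    have hψhap : ∀ v : V, ψh v = ↑(ψ (Pm v)) := fun v => rfl
    have hψhm : ∀ v : V, θ (ψh v) = -(ψh v) := by
      intro v
      exact (hmem _).mp (ψ (Pm v)).2
    have hψh_zero : ∀ v : V, θ v = v → ψh v = 0 := by
      intro v hv
      rw [hψhap, hPm_zero v hv, map_zero]; rfl
    have hψh_theta : ∀ v : V, ψh (θ v) = -(ψh v) := by
      intro v
      rw [hψhap, hPm_theta, map_neg]
      rfl
    -- dropping the V₊ component
    have hdrop : ∀ z v : V, θ z = -z → B z v = B z ((2⁻¹:ℝ) • (v - θ v)) := by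
      intro z v hz
      have hp : θ ((2⁻¹:ℝ) • (v + θ v)) = (2⁻¹:ℝ) • (v + θ v) := by
        rw [map_smul, map_add, hθ2', add_comm]
      have h0 : B z ((2⁻¹:ℝ) • (v + θ v)) = 0 := orth z _ hz hp
      have hdv : v = (2⁻¹:ℝ) • (v + θ v) + (2⁻¹:ℝ) • (v - θ v) := by module
      conv_lhs => rw [hdv]
      rw [map_add, h0, zero_add]
    have hkey : ∀ u w : V, B (ψh u) w = b (Pm u) (Pm w) := by
      intro u w
      rw [hdrop _ _ (hψhm u), ← hPm_apply w]
      calc B (ψh u) ↑(Pm w) = Bm (ψ (Pm u)) (Pm w) := by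
            rw [hψhap]
            simp only [hBmdef, LinearMap.BilinForm.restrict_apply, LinearMap.domRestrict_apply]
        _ = b (Pm u) (Pm w) := hψ _ _
    have hψhsym : ∀ u w : V, B (ψh u) w = B u (ψh w) := by
      intro u w
      rw [hkey u w, hsymm u (ψh w), hkey w u, hb]
    -- the endomorphism φ
    set φ : V →ₗ[ℝ] V := -(D ∘ₗ ψh + ψh ∘ₗ D) with hφdef
    have hφap : ∀ v : V, φ v = -(D (ψh v)) - ψh (D v) := by
      intro v
      simp only [hφdef, LinearMap.neg_apply, LinearMap.add_apply, LinearMap.comp_apply]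
      abel
    refine ⟨φ, ⟨?_, ?_, ?_⟩, ?_⟩
    · -- antisymmetric
      intro x y
      have e1 : B (D (ψh x)) y = -(B (ψh x) (D y)) := hDskew _ _
      have e2 : B (D x) (ψh y) = -(B x (D (ψh y))) := hDskew _ _
      have e3 : B (ψh (D x)) y = B (D x) (ψh y) := hψhsym _ _
      have e4 : B (ψh x) (D y) = B x (ψh (D y)) := hψhsym _ _
      rw [hφap, hφap]
      simp only [map_neg, map_sub, LinearMap.neg_apply, LinearMap.sub_apply]
      linarith [e1, e2, e3, e4]
    · -- commutes with D
      ext v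
      simp only [LinearMap.comp_apply]
      rw [hφap, hφap, hD2' v, map_neg ψh, map_sub D, map_neg D, hD2' (ψh v)]
      abel
    · -- anticommutes with θ
      ext v
      simp only [LinearMap.comp_apply, LinearMap.neg_apply]
      have h1 : ψh (D (θ v)) = ψh (D v) := by
        rw [hDθ' v, map_neg ψh, hψh_theta, neg_neg]
      have h2 : θ (D (ψh v)) = D (ψh v) := by
        have h := hDθ' (ψh v)
        rw [hψhm, map_neg] at h
        exact (neg_injective h).symm
      rw [hφap, hφap, hψh_theta, h1, map_neg D, map_sub θ, map_neg θ, h2, hψhm]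
      abel
    · -- iota8 φ = b
      refine LinearMap.ext fun x => LinearMap.ext fun y => ?_
      simp only [iota8, LinearMap.compl₁₂_apply, LinearMap.comp_apply, Submodule.subtype_apply]
      have hx : θ (x : V) = -(x : V) := (hmem _).mp x.2
      have hDx : θ (D (x : V)) = D (x : V) := by
        have h := hDθ' (x : V)
        rw [hx, map_neg] at h
        exact (neg_injective h).symm
      have h1 : ψh (D (x : V)) = 0 := hψh_zero _ hDx
      have h2 : φ (D (x : V)) = ψh (x : V) := by
        rw [hφap, h1, hD2', map_neg ψh, map_zero D]
        abel
      have hxeq : Pm (x : V) = x := Subtype.ext (hPm_fix _ hx)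
      have hyeq : Pm (y : V) = y := Subtype.ext (hPm_fix _ ((hmem _).mp y.2))
      rw [h2, hkey, hxeq, hyeq]
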